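/- Let S = R[x;σ] be the skew polynomial ring with σ a ring automorphism of R, and let M be a right R-module. If the inverse polynomial module M[x⁻¹], regarded as a right R-module, is a completely σ-compatible Bass module, then Att(M[x⁻¹]_S) = { P[x] : P ∈ Att(M_R) }. -/

import Mathlib

/-!
STATEMENT 15. Let `S = R[x;σ]` be the skew polynomial ring with `σ` a ring automorphism of `R`,
and let `M` be a right `R`-module.  If the inverse polynomial module `M[x⁻¹]`, regarded as a
right `R`-module, is a completely `σ`-compatible Bass module, then
`Att(M[x⁻¹]_S) = { P[x] : P ∈ Att(M_R) }`.

Encoding: right modules over a ring `T` are modules over `Tᵐᵒᵖ` (`m·t := op t • m`).  The skew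
polynomial ring is axiomatized by `hbasis` and `hcomm` (`x·r = σ(r)·x`).  The inverse polynomial
module `M[x⁻¹]` is `ℕ →₀ M`, a right `S`-module with action
`(m x⁻ⁱ)·(r xʲ) = m σ⁻ⁱ(r) x^{-(i-j)}` if `j ≤ i` and `0` otherwise (`hact`); restricting
scalars along `ι : R →+* S` makes it a right `R`-module, whose submodules are encoded as subsets
closed under the restricted action (`IsRSubmoduleSet`).  `hcompatInv` says that `M[x⁻¹]` is
completely `σ`-compatible as a right `R`-module, and `hBass` that it is a Bass module (every
proper submodule is contained in a maximal submodule).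
-/

open MulOpposite

/-- A prime ideal of a (possibly noncommutative) ring `T`, as a set: a proper two-sided ideal
`P` such that `aTb ⊆ P` implies `a ∈ P` or `b ∈ P`. -/
def IsPrimeIdealSet (T : Type*) [Ring T] (P : Set T) : Prop :=
  (0 : T) ∈ P ∧ (∀ a ∈ P, ∀ b ∈ P, a + b ∈ P) ∧
    (∀ a ∈ P, ∀ t : T, t * a ∈ P ∧ a * t ∈ P) ∧ P ≠ Set.univ ∧
    ∀ a b : T, (∀ t : T, a * t * b ∈ P) → a ∈ P ∨ b ∈ P

/-- The annihilator of the quotient of the right `T`-module `L` by the subset `Nset`, that is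
`{t : T | L·t ⊆ Nset}`. -/
def annIn (T : Type*) [Ring T] (L : Type*) [AddCommGroup L] [Module Tᵐᵒᵖ L]
    (Nset : Set L) : Set T :=
  {t : T | ∀ l : L, op t • l ∈ Nset}

/-- The quotient `L/N` is a coprime right `T`-module: it is nonzero and
`ann_T(L/N) = ann_T((L/N)/(N'/N))` for every proper submodule `N'/N` of `L/N`; equivalently,
`ann_T(L/N) = ann_T(L/N')` for every submodule `N ≤ N' < L`. -/
def CoprimeQuot (T : Type*) [Ring T] (L : Type*) [AddCommGroup L] [Module Tᵐᵒᵖ L]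
    (N : Submodule Tᵐᵒᵖ L) : Prop :=
  (∃ l : L, l ∉ N) ∧
    ∀ N' : Submodule Tᵐᵒᵖ L, N ≤ N' → N' ≠ ⊤ →
      annIn T L (N : Set L) = annIn T L (N' : Set L)

/-- The set of attached prime ideals of the right `T`-module `L`: prime ideals of the form
`ann_T(L/N)` with `L/N` a coprime quotient of `L`. -/
def AttSet (T : Type*) [Ring T] (L : Type*) [AddCommGroup L] [Module Tᵐᵒᵖ L] : Set (Set T) :=
  {P | IsPrimeIdealSet T P ∧
    ∃ N : Submodule Tᵐᵒᵖ L, CoprimeQuot T L N ∧ P = annIn T L (N : Set L)}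

/-- For an ideal `P` of `R`, `polyIn ι x P` is `P[x]`: the set of polynomials in `S` all of
whose coefficients lie in `P`. -/
def polyIn {R S : Type*} [Ring R] [Ring S] (ι : R →+* S) (x : S) (P : Set R) : Set S :=
  {s : S | ∃ c : ℕ →₀ R, (∀ k, c k ∈ P) ∧ s = c.sum fun k r => ι r * x ^ k}

/-- A subset of the right `A`-module `L` that is an `R`-submodule for the right `R`-action
obtained by restricting scalars along `ι : R →+* A`. -/
def IsRSubmoduleSet {R A : Type*} [Ring R] [Ring A] (ι : R →+* A)
    (L : Type*) [AddCommGroup L] [Module Aᵐᵒᵖ L] (Q : Set L) : Prop :=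
  (0 : L) ∈ Q ∧ (∀ f ∈ Q, ∀ g ∈ Q, f + g ∈ Q) ∧ (∀ f ∈ Q, -f ∈ Q) ∧
    ∀ f ∈ Q, ∀ r : R, op (ι r) • f ∈ Q


section SkwAux

set_option linter.unusedSectionVars false

variable {R : Type*} [Ring R] (σ : R ≃+* R)
variable {S : Type*} [Ring S] (ι : R →+* S) (x : S)
variable {M : Type*} [AddCommGroup M] [Module Rᵐᵒᵖ M] [Module Sᵐᵒᵖ (ℕ →₀ M)]

lemma skw_it_one (n : ℕ) : (⇑σ.symm)^[n] (1 : R) = 1 := by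
  induction n with
  | zero => rfl
  | succ n ih => rw [Function.iterate_succ_apply', ih, map_one]

lemma skw_it_zero (n : ℕ) : (⇑σ.symm)^[n] (0 : R) = 0 := by
  induction n with
  | zero => rfl
  | succ n ih => rw [Function.iterate_succ_apply', ih, map_zero]

lemma skw_it_symm_apply (n : ℕ) (a : R) : (⇑σ.symm)^[n] ((⇑σ)^[n] a) = a := by
  have h : Function.LeftInverse (⇑σ.symm) (⇑σ) := σ.symm_apply_apply
  exact h.iterate n a

lemma skw_smul_mul {L : Type*} [AddCommGroup L] [Module Sᵐᵒᵖ L] (a b : S) (l : L) :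
    op (a * b) • l = op b • (op a • l) := by rw [op_mul, mul_smul]

lemma skw_op_sum_smul {L : Type*} [AddCommGroup L] [Module Sᵐᵒᵖ L] {γ : Type*} (t : Finset γ)
    (g : γ → S) (l : L) : op (∑ a ∈ t, g a) • l = ∑ a ∈ t, op (g a) • l := by
  have h : (op (∑ a ∈ t, g a) : Sᵐᵒᵖ) = ∑ a ∈ t, op (g a) :=
    map_sum (opAddEquiv : S ≃+ Sᵐᵒᵖ) g t
  rw [h, Finset.sum_smul]

lemma skw_xpow_iota (hcomm : ∀ r : R, x * ι r = ι (σ r) * x) (n : ℕ) (a : R) :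
    x ^ n * ι a = ι ((⇑σ)^[n] a) * x ^ n := by
  induction n with
  | zero => simp
  | succ n ih =>
      rw [pow_succ', mul_assoc, ih, ← mul_assoc, hcomm, mul_assoc, ← pow_succ',
        Function.iterate_succ_apply']

lemma skw_iota_xpow (hcomm : ∀ r : R, x * ι r = ι (σ r) * x) (n : ℕ) (r : R) :
    ι r * x ^ n = x ^ n * ι ((⇑σ.symm)^[n] r) := by
  rw [skw_xpow_iota σ ι x hcomm n]
  congr 2
  have h2 : Function.RightInverse (⇑σ.symm) (⇑σ) := σ.apply_symm_apply
  exact (h2.iterate n r).symm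

lemma skw_rsub_sum_mem {Q : Set (ℕ →₀ M)} (hQ : IsRSubmoduleSet ι (ℕ →₀ M) Q)
    {γ : Type*} (t : Finset γ) (g : γ → (ℕ →₀ M)) (h : ∀ a ∈ t, g a ∈ Q) :
    (∑ a ∈ t, g a) ∈ Q :=
  Finset.sum_induction g (· ∈ Q) (fun a b ha hb => hQ.2.1 a ha b hb) hQ.1 h

lemma skw_rsub_sub_mem {Q : Set (ℕ →₀ M)} (hQ : IsRSubmoduleSet ι (ℕ →₀ M) Q)
    {a b : ℕ →₀ M} (hab : a + b ∈ Q) (hb : b ∈ Q) : a ∈ Q := by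
  have : a = (a + b) + -b := by abel
  rw [this]
  exact hQ.2.1 _ hab _ (hQ.2.2.1 _ hb)

variable (hact : ∀ (m : M) (i : ℕ) (r : R) (j : ℕ),
      op (ι r * x ^ j) • Finsupp.single i m =
        if j ≤ i then Finsupp.single (i - j) (op ((⇑σ.symm)^[i] r) • m)
        else (0 : ℕ →₀ M))

include hact

lemma skw_act_iota (r : R) (i : ℕ) (m : M) :
    op (ι r) • (Finsupp.single i m : ℕ →₀ M)
      = Finsupp.single i (op ((⇑σ.symm)^[i] r) • m) := by
  have h := hact m i r 0
  simpa using h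

lemma skw_act_xpow (j i : ℕ) (m : M) :
    op (x ^ j) • (Finsupp.single i m : ℕ →₀ M)
      = if j ≤ i then Finsupp.single (i - j) m else 0 := by
  have h := hact m i 1 j
  rw [map_one, one_mul, skw_it_one] at h
  simpa using h

lemma skw_apply_iota_smul (r : R) (f : ℕ →₀ M) (j : ℕ) :
    (op (ι r) • f) j = op ((⇑σ.symm)^[j] r) • (f j) := by
  induction f using Finsupp.induction_linear with
  | zero => simp
  | add f g hf hg => rw [smul_add, Finsupp.add_apply, hf, hg, Finsupp.add_apply, smul_add]
  | single a b =>
      rw [skw_act_iota σ ι x hact]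
      rcases eq_or_ne a j with rfl | hne
      · simp
      · simp [Finsupp.single_apply, hne]

lemma skw_apply_xpow_smul (k : ℕ) (f : ℕ →₀ M) (j : ℕ) :
    (op (x ^ k) • f) j = f (j + k) := by
  induction f using Finsupp.induction_linear with
  | zero => simp
  | add f g hf hg => rw [smul_add, Finsupp.add_apply, hf, hg, Finsupp.add_apply]
  | single a b =>
      rw [skw_act_xpow σ ι x hact]
      rcases le_or_gt k a with hle | hlt
      · rw [if_pos hle, Finsupp.single_apply, Finsupp.single_apply]
        rcases eq_or_ne a (j + k) with rfl | hne
        · rw [if_pos (by omega), if_pos rfl]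
        · rw [if_neg (by omega), if_neg (by omega)]
      · rw [if_neg (by omega), Finsupp.single_apply, if_neg (by omega)]
        simp

/-- action of a decomposed element of `S` on a single (general exponent map). -/
lemma skw_smul_single (g : ℕ → ℕ) (c : ℕ →₀ R) (i : ℕ) (m : M) :
    op (c.sum fun k r => ι r * x ^ (g k)) • (Finsupp.single i m : ℕ →₀ M)
      = ∑ k ∈ c.support, (if g k ≤ i
          then Finsupp.single (i - g k) (op ((⇑σ.symm)^[i] (c k)) • m)
          else (0 : ℕ →₀ M)) := by
  rw [Finsupp.sum, skw_op_sum_smul]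
  exact Finset.sum_congr rfl fun k _ => hact m i (c k) (g k)

/-- membership workhorse: if all the single pieces lie in an additively closed set,
so does `op s • l`. -/
lemma skw_smul_mem {Q : Set (ℕ →₀ M)} (hzero : (0 : ℕ →₀ M) ∈ Q)
    (hadd : ∀ f ∈ Q, ∀ g ∈ Q, f + g ∈ Q) (g : ℕ → ℕ) (c : ℕ →₀ R) (l : ℕ →₀ M)
    (h : ∀ i k : ℕ, g k ≤ i →
      Finsupp.single (i - g k) (op ((⇑σ.symm)^[i] (c k)) • (l i)) ∈ Q) :
    op (c.sum fun k r => ι r * x ^ (g k)) • l ∈ Q := by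
  have hsum : ∀ {γ : Type} (t : Finset γ) (g' : γ → (ℕ →₀ M)), (∀ a ∈ t, g' a ∈ Q) →
      (∑ a ∈ t, g' a) ∈ Q := fun t g' hg =>
    Finset.sum_induction g' (· ∈ Q) (fun a b ha hb => hadd a ha b hb) hzero hg
  have hdec : op (c.sum fun k r => ι r * x ^ (g k)) • l
      = ∑ i ∈ l.support, op (c.sum fun k r => ι r * x ^ (g k)) • Finsupp.single i (l i) := by
    conv_lhs => rw [← Finsupp.sum_single l]
    simp only [Finsupp.sum]
    rw [Finset.smul_sum]
  rw [hdec]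
  refine hsum _ _ fun i _ => ?_
  rw [skw_smul_single σ ι x hact]
  refine hsum _ _ fun k _ => ?_
  split_ifs with hk
  · exact h i k hk
  · exact hzero

/-- shifting by a power of `x` on a decomposed action. -/
lemma skw_xpow_smul_smul (c : ℕ →₀ R) (l : ℕ →₀ M)
    (t : ℕ) : op (x ^ t) • (op (c.sum fun k r => ι r * x ^ k) • l)
      = op (c.sum fun k r => ι r * x ^ (k + t)) • l := by
  rw [← skw_smul_mul]
  congr 1
  congr 1
  rw [Finsupp.sum_mul]
  exact Finsupp.sum_congr fun k _ => by rw [mul_assoc, ← pow_add]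

end SkwAux

section SkwMain

set_option linter.unusedSectionVars false

variable {R : Type*} [Ring R] (σ : R ≃+* R)
variable {S : Type*} [Ring S] (ι : R →+* S) (x : S)
variable {M : Type*} [AddCommGroup M] [Module Rᵐᵒᵖ M] [Module Sᵐᵒᵖ (ℕ →₀ M)]
variable (hact : ∀ (m : M) (i : ℕ) (r : R) (j : ℕ),
      op (ι r * x ^ j) • Finsupp.single i m =
        if j ≤ i then Finsupp.single (i - j) (op ((⇑σ.symm)^[i] r) • m)
        else (0 : ℕ →₀ M))
variable (hcompatInv : ∀ Q : Set (ℕ →₀ M), IsRSubmoduleSet ι (ℕ →₀ M) Q →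
      ∀ (f : ℕ →₀ M) (r : R),
        op (ι r) • f ∈ Q ↔ op (ι (σ r)) • f ∈ Q)

/-- The annihilator of a coprime quotient is a prime ideal. -/
lemma coprime_ann_prime {T : Type*} [Ring T] {L : Type*} [AddCommGroup L] [Module Tᵐᵒᵖ L]
    (N : Submodule Tᵐᵒᵖ L) (h : CoprimeQuot T L N) :
    IsPrimeIdealSet T (annIn T L (N : Set L)) := by
  obtain ⟨⟨l₀, hl₀⟩, hco⟩ := h
  refine ⟨?_, ?_, ?_, ?_, ?_⟩
  · intro l; simp
  · intro a ha b hb l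
    have : op (a + b) • l = op a • l + op b • l := by rw [op_add, add_smul]
    rw [this]; exact N.add_mem (ha l) (hb l)
  · intro a ha t
    constructor
    · intro l
      rw [op_mul, mul_smul]
      exact ha _
    · intro l
      rw [op_mul, mul_smul]
      exact N.smul_mem _ (ha l)
  · intro hEq
    have h1 : (1 : T) ∈ annIn T L (N : Set L) := by rw [hEq]; trivial
    have := h1 l₀
    rw [op_one, one_smul] at this
    exact hl₀ this
  · intro a b hab
    by_cases hb : b ∈ annIn T L (N : Set L)
    · exact Or.inr hb
    · left
      have hb' : ∃ l, op b • l ∉ N := by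
        by_contra hc
        push_neg at hc
        exact hb hc
      obtain ⟨l₁, hl₁⟩ := hb'
      set N₂ : Submodule Tᵐᵒᵖ L :=
        { carrier := {l | ∀ t : T, op b • (op t • l) ∈ N}
          add_mem' := by
            intro u v hu hv t
            rw [smul_add, smul_add]
            exact N.add_mem (hu t) (hv t)
          zero_mem' := by
            intro t
            rw [smul_zero, smul_zero]
            exact N.zero_mem
          smul_mem' := by
            intro s u hu t
            have : op (unop s * t) • u = op t • (s • u) := by
              rw [op_mul, mul_smul, op_unop]
            rw [← this]
            exact hu _ } with hN₂
      have hNle : N ≤ N₂ := by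
        intro u hu t
        exact N.smul_mem _ (N.smul_mem _ hu)
      have hNtop : N₂ ≠ ⊤ := by
        intro htop
        have : l₁ ∈ N₂ := htop ▸ Submodule.mem_top
        have := this 1
        rw [op_one, one_smul] at this
        exact hl₁ this
      have := hco N₂ hNle hNtop
      rw [this]
      intro l t
      have : op b • (op t • (op a • l)) = op (a * t * b) • l := by
        rw [op_mul, mul_smul, op_mul, mul_smul]
      rw [this]
      exact hab t l

include hact hcompatInv

/-- complete σ-compatibility of M itself -/
lemma skw_mcompat (N : Submodule Rᵐᵒᵖ M) (m : M) (r : R) :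
    op r • m ∈ N ↔ op (σ r) • m ∈ N := by
  classical
  set Q : Set (ℕ →₀ M) := {f | f 0 ∈ N} with hQdef
  have hQ : IsRSubmoduleSet ι (ℕ →₀ M) Q := by
    refine ⟨?_, ?_, ?_, ?_⟩
    · show (0 : ℕ →₀ M) 0 ∈ N; simp
    · intro f hf g hg
      show (f + g) 0 ∈ N
      rw [Finsupp.add_apply]; exact N.add_mem hf hg
    · intro f hf
      show (-f) 0 ∈ N
      rw [Finsupp.neg_apply]; exact N.neg_mem hf
    · intro f hf r'
      show (op (ι r') • f) 0 ∈ N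
      rw [skw_apply_iota_smul σ ι x hact]
      exact N.smul_mem _ hf
  have h := hcompatInv Q hQ (Finsupp.single 0 m) r
  rw [skw_act_iota σ ι x hact, skw_act_iota σ ι x hact] at h
  have e1 : ∀ w : R, (Finsupp.single 0 (op w • m) : ℕ →₀ M) ∈ Q ↔ op w • m ∈ N := by
    intro w
    show (Finsupp.single 0 (op w • m) : ℕ →₀ M) 0 ∈ N ↔ _
    rw [Finsupp.single_eq_same]
  simpa only [Function.iterate_zero, id_eq, e1] using h

lemma skw_stab_symm (N : Submodule Rᵐᵒᵖ M) (m : M) (r : R) (t : ℕ) :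
    op ((⇑σ.symm)^[t] r) • m ∈ N ↔ op r • m ∈ N := by
  induction t with
  | zero => rfl
  | succ n ih =>
      rw [Function.iterate_succ_apply']
      rw [skw_mcompat σ ι x hact hcompatInv N m ((⇑σ.symm) ((⇑σ.symm)^[n] r))] at *
      rw [σ.apply_symm_apply]
      exact ih

lemma skw_stab_iter (N : Submodule Rᵐᵒᵖ M) (m : M) (r : R) (t : ℕ) :
    op ((⇑σ)^[t] r) • m ∈ N ↔ op r • m ∈ N := by
  induction t with
  | zero => rfl
  | succ n ih =>
      rw [Function.iterate_succ_apply', ← skw_mcompat σ ι x hact hcompatInv N m ((⇑σ)^[n] r)]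
      exact ih

end SkwMain

section SkwMega

set_option linter.unusedSectionVars false
set_option maxHeartbeats 1000000

variable {R : Type*} [Ring R] (σ : R ≃+* R)
variable {S : Type*} [Ring S] (ι : R →+* S) (x : S)
variable {M : Type*} [AddCommGroup M] [Module Rᵐᵒᵖ M] [Module Sᵐᵒᵖ (ℕ →₀ M)]
variable (hcomm : ∀ r : R, x * ι r = ι (σ r) * x)
variable (hact : ∀ (m : M) (i : ℕ) (r : R) (j : ℕ),
      op (ι r * x ^ j) • Finsupp.single i m =
        if j ≤ i then Finsupp.single (i - j) (op ((⇑σ.symm)^[i] r) • m)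
        else (0 : ℕ →₀ M))
variable (hcompatInv : ∀ Q : Set (ℕ →₀ M), IsRSubmoduleSet ι (ℕ →₀ M) Q →
      ∀ (f : ℕ →₀ M) (r : R),
        op (ι r) • f ∈ Q ↔ op (ι (σ r)) • f ∈ Q)
variable {Q' : Set (ℕ →₀ M)}

/-- the `j`-th component submodule of a maximal `R`-submodule set. -/
def skwBSub (hact : ∀ (m : M) (i : ℕ) (r : R) (j : ℕ),
      op (ι r * x ^ j) • Finsupp.single i m =
        if j ≤ i then Finsupp.single (i - j) (op ((⇑σ.symm)^[i] r) • m)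
        else (0 : ℕ →₀ M)) (hQ' : IsRSubmoduleSet ι (ℕ →₀ M) Q') (j : ℕ) :
    Submodule Rᵐᵒᵖ M where
  carrier := {m | Finsupp.single j m ∈ Q'}
  zero_mem' := by
    show (Finsupp.single j (0 : M)) ∈ Q'
    rw [Finsupp.single_zero]
    exact hQ'.1
  add_mem' := by
    intro a b ha hb
    show (Finsupp.single j (a + b)) ∈ Q'
    rw [Finsupp.single_add]
    exact hQ'.2.1 _ ha _ hb
  smul_mem' := by
    intro r m hm
    show (Finsupp.single j (r • m)) ∈ Q'
    have h := hQ'.2.2.2 _ hm ((⇑σ)^[j] (unop r))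
    rw [skw_act_iota σ ι x hact, skw_it_symm_apply] at h
    have : op (unop r) • m = r • m := by rw [op_unop]
    rw [this] at h
    exact h

lemma skw_mem_BSub (hQ' : IsRSubmoduleSet ι (ℕ →₀ M) Q') (j : ℕ) (m : M) :
    m ∈ skwBSub σ ι x hact hQ' j ↔ Finsupp.single j m ∈ Q' := Iff.rfl

variable (hQ' : IsRSubmoduleSet ι (ℕ →₀ M) Q')
variable (hQmax : ∀ Q'' : Set (ℕ →₀ M), IsRSubmoduleSet ι (ℕ →₀ M) Q'' → Q' ⊆ Q'' →
      Q'' = Q' ∨ Q'' = Set.univ)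

include hact hcompatInv hQ'

/-- transfer of annihilator elements between active components. -/
lemma skw_rho_trans (hQmax : ∀ Q'' : Set (ℕ →₀ M), IsRSubmoduleSet ι (ℕ →₀ M) Q'' → Q' ⊆ Q'' →
      Q'' = Q' ∨ Q'' = Set.univ)
    (α j : ℕ) (hα : ∃ m, Finsupp.single α m ∉ Q')
    (r : R) (hr : ∀ m, Finsupp.single α (op r • m) ∈ Q') (m' : M) :
    Finsupp.single j (op r • m') ∈ Q' := by
  classical
  by_cases hj : ∀ m₀ : M, Finsupp.single j m₀ ∈ Q'
  · exact hj _
  rcases eq_or_ne j α with rfl | hne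
  · exact hr m'
  -- enlarge Q' by all singles at α; by maximality get everything
  set Q₂ : Set (ℕ →₀ M) := {f | ∃ q ∈ Q', ∃ m : M, f = q + Finsupp.single α m} with hQ₂
  have hQ₂sub : IsRSubmoduleSet ι (ℕ →₀ M) Q₂ := by
    refine ⟨⟨0, hQ'.1, 0, by simp⟩, ?_, ?_, ?_⟩
    · rintro f ⟨q, hq, m, rfl⟩ g ⟨p, hp, n, rfl⟩
      exact ⟨q + p, hQ'.2.1 _ hq _ hp, m + n, by rw [Finsupp.single_add]; abel⟩
    · rintro f ⟨q, hq, m, rfl⟩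
      exact ⟨-q, hQ'.2.2.1 _ hq, -m, by rw [Finsupp.single_neg]; abel⟩
    · rintro f ⟨q, hq, m, rfl⟩ r'
      refine ⟨op (ι r') • q, hQ'.2.2.2 _ hq r', op ((⇑σ.symm)^[α] r') • m, ?_⟩
      rw [smul_add, skw_act_iota σ ι x hact]
  have hQ₂ne : Q₂ ≠ Q' := by
    intro hEq
    obtain ⟨mt, hmt⟩ := hα
    apply hmt
    rw [← hEq]
    exact ⟨0, hQ'.1, mt, by rw [zero_add]⟩
  have hQ₂univ : Q₂ = Set.univ := by
    rcases hQmax Q₂ hQ₂sub (fun q hq => ⟨q, hq, 0, by simp⟩) with h | h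
    · exact absurd h hQ₂ne
    · exact h
  -- decompose single j m'
  have : (Finsupp.single j m' : ℕ →₀ M) ∈ Q₂ := by rw [hQ₂univ]; trivial
  obtain ⟨q, hq, m, heq⟩ := this
  have hsum : Finsupp.single α (-m) + Finsupp.single j m' ∈ Q' := by
    have : Finsupp.single α (-m) + Finsupp.single j m' = q := by
      rw [Finsupp.single_neg, heq]; abel
    rw [this]; exact hq
  -- act by ι (σ^[j] r)
  have hX := hQ'.2.2.2 _ hsum ((⇑σ)^[j] r)
  rw [smul_add, skw_act_iota σ ι x hact, skw_act_iota σ ι x hact, skw_it_symm_apply] at hX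
  -- the α-component is in Q'
  have hup : ∀ m₀ : M, Finsupp.single α (op ((⇑σ)^[j] r) • m₀) ∈ Q' := fun m₀ =>
    (skw_stab_iter σ ι x hact hcompatInv (skwBSub σ ι x hact hQ' α) m₀ r j).mpr (hr m₀)
  have hw : ∀ m₀ : M, Finsupp.single α (op ((⇑σ.symm)^[α] ((⇑σ)^[j] r)) • m₀) ∈ Q' := fun m₀ =>
    (skw_stab_symm σ ι x hact hcompatInv (skwBSub σ ι x hact hQ' α) m₀ ((⇑σ)^[j] r) α).mpr (hup m₀)
  exact skw_rsub_sub_mem ι hQ' (by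
    rw [add_comm] at hX
    exact hX) (hw (-m))

/-- for `r` annihilating the `α` component, it annihilates every component. -/
lemma skw_single_mem (hQmax : ∀ Q'' : Set (ℕ →₀ M), IsRSubmoduleSet ι (ℕ →₀ M) Q'' → Q' ⊆ Q'' →
      Q'' = Q' ∨ Q'' = Set.univ)
    (α : ℕ) (hα : ∃ m, Finsupp.single α m ∉ Q')
    (r : R) (hr : ∀ m, Finsupp.single α (op r • m) ∈ Q') (j : ℕ) (m : M) :
    Finsupp.single j (op r • m) ∈ Q' :=
  skw_rho_trans σ ι x hact hcompatInv hQ' hQmax α j hα r hr m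

end SkwMega

section SkwKey

set_option linter.unusedSectionVars false
set_option maxHeartbeats 1000000

variable {R : Type*} [Ring R] (σ : R ≃+* R)
variable {S : Type*} [Ring S] (ι : R →+* S) (x : S)
variable {M : Type*} [AddCommGroup M] [Module Rᵐᵒᵖ M] [Module Sᵐᵒᵖ (ℕ →₀ M)]
variable (hcomm : ∀ r : R, x * ι r = ι (σ r) * x)
variable (hact : ∀ (m : M) (i : ℕ) (r : R) (j : ℕ),
      op (ι r * x ^ j) • Finsupp.single i m =
        if j ≤ i then Finsupp.single (i - j) (op ((⇑σ.symm)^[i] r) • m)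
        else (0 : ℕ →₀ M))
variable (hcompatInv : ∀ Q : Set (ℕ →₀ M), IsRSubmoduleSet ι (ℕ →₀ M) Q →
      ∀ (f : ℕ →₀ M) (r : R),
        op (ι r) • f ∈ Q ↔ op (ι (σ r)) • f ∈ Q)
variable {Q' : Set (ℕ →₀ M)} (hQ' : IsRSubmoduleSet ι (ℕ →₀ M) Q')
variable (hQmax : ∀ Q'' : Set (ℕ →₀ M), IsRSubmoduleSet ι (ℕ →₀ M) Q'' → Q' ⊆ Q'' →
      Q'' = Q' ∨ Q'' = Set.univ)

include hact hcompatInv hQ' hQmax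

/-- coefficient extraction: any `s` pushing all singles into `Q'`-components has all
coefficients annihilating the minimal active component. -/
lemma skw_key1 (α : ℕ) (hα : ∃ m, Finsupp.single α m ∉ Q')
    (hαmin : ∀ j < α, ∀ m : M, Finsupp.single j m ∈ Q')
    (c : ℕ →₀ R)
    (hs : ∀ l : ℕ →₀ M, op (c.sum fun k r => ι r * x ^ k) • l ∈ Q') :
    ∀ (k : ℕ) (m : M), Finsupp.single α (op (c k) • m) ∈ Q' := by
  classical
  intro k
  induction k using Nat.strong_induction_on with
  | _ k ih =>
    intro m
    by_cases hksup : k ∈ c.support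
    · have hX := hs (Finsupp.single (α + k) m)
      rw [skw_smul_single σ ι x hact (fun k => k)] at hX
      set g : ℕ → (ℕ →₀ M) := fun k' => if k' ≤ α + k
          then Finsupp.single (α + k - k') (op ((⇑σ.symm)^[α + k] (c k')) • m)
          else (0 : ℕ →₀ M) with hg
      have herase : ∀ k' ∈ c.support.erase k, g k' ∈ Q' := by
        intro k' hk'
        have hkne : k' ≠ k := Finset.ne_of_mem_erase hk'
        rw [hg]
        dsimp only
        split_ifs with hle
        · rcases lt_or_gt_of_ne hkne with hlt | hgt
          · -- k' < k : use the inductive hypothesis and component transfer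
            have hrk : ∀ m₀ : M,
                Finsupp.single α (op ((⇑σ.symm)^[α + k] (c k')) • m₀) ∈ Q' := fun m₀ =>
              (skw_stab_symm σ ι x hact hcompatInv (skwBSub σ ι x hact hQ' α) m₀ (c k')
                (α + k)).mpr (ih k' hlt m₀)
            exact skw_single_mem σ ι x hact hcompatInv hQ' hQmax α hα _ hrk _ _
          · -- k' > k : the component index is below α
            exact hαmin (α + k - k') (by omega) _
        · exact hQ'.1
      have hsplit : g k + ∑ k' ∈ c.support.erase k, g k' = ∑ k' ∈ c.support, g k' :=
        Finset.add_sum_erase _ g hksup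
      have hXQ : g k + ∑ k' ∈ c.support.erase k, g k' ∈ Q' := by rw [hsplit]; exact hX
      have hgk : g k ∈ Q' :=
        skw_rsub_sub_mem ι hQ' hXQ (skw_rsub_sum_mem ι hQ' _ _ herase)
      rw [hg] at hgk
      dsimp only at hgk
      rw [if_pos (by omega), show α + k - k = α by omega] at hgk
      exact (skw_stab_symm σ ι x hact hcompatInv (skwBSub σ ι x hact hQ' α) m (c k)
        (α + k)).mp hgk
    · have : c k = 0 := Finsupp.notMem_support_iff.mp hksup
      rw [this, op_zero, zero_smul, Finsupp.single_zero]
      exact hQ'.1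

/-- converse: coefficients annihilating the minimal active component give an
annihilating polynomial (on every `x`-shift). -/
lemma skw_key2 (α : ℕ) (hα : ∃ m, Finsupp.single α m ∉ Q')
    (c : ℕ →₀ R) (hc : ∀ (k : ℕ) (m : M), Finsupp.single α (op (c k) • m) ∈ Q')
    (l : ℕ →₀ M) (t : ℕ) :
    op (x ^ t) • (op (c.sum fun k r => ι r * x ^ k) • l) ∈ Q' := by
  rw [skw_xpow_smul_smul σ ι x hact]
  refine skw_smul_mem σ ι x hact hQ'.1 hQ'.2.1 (fun k => k + t) c l ?_
  intro i k hki
  have hrk : ∀ m₀ : M, Finsupp.single α (op ((⇑σ.symm)^[i] (c k)) • m₀) ∈ Q' := fun m₀ =>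
    (skw_stab_symm σ ι x hact hcompatInv (skwBSub σ ι x hact hQ' α) m₀ (c k) i).mpr (hc k m₀)
  exact skw_single_mem σ ι x hact hcompatInv hQ' hQmax α hα _ hrk _ _

end SkwKey

section SkwPack

set_option linter.unusedSectionVars false
set_option maxHeartbeats 1000000

variable {R : Type*} [Ring R] (σ : R ≃+* R)
variable {S : Type*} [Ring S] (ι : R →+* S) (x : S)
variable {M : Type*} [AddCommGroup M] [Module Rᵐᵒᵖ M] [Module Sᵐᵒᵖ (ℕ →₀ M)]
variable (hbasis : Function.Bijective fun c : ℕ →₀ R => c.sum fun k r => ι r * x ^ k)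
variable (hcomm : ∀ r : R, x * ι r = ι (σ r) * x)
variable (hact : ∀ (m : M) (i : ℕ) (r : R) (j : ℕ),
      op (ι r * x ^ j) • Finsupp.single i m =
        if j ≤ i then Finsupp.single (i - j) (op ((⇑σ.symm)^[i] r) • m)
        else (0 : ℕ →₀ M))
variable (hcompatInv : ∀ Q : Set (ℕ →₀ M), IsRSubmoduleSet ι (ℕ →₀ M) Q →
      ∀ (f : ℕ →₀ M) (r : R),
        op (ι r) • f ∈ Q ↔ op (ι (σ r)) • f ∈ Q)
variable (hBass : ∀ Q : Set (ℕ →₀ M), IsRSubmoduleSet ι (ℕ →₀ M) Q → Q ≠ Set.univ →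
      ∃ Q' : Set (ℕ →₀ M), IsRSubmoduleSet ι (ℕ →₀ M) Q' ∧ Q ⊆ Q' ∧ Q' ≠ Set.univ ∧
        ∀ Q'' : Set (ℕ →₀ M), IsRSubmoduleSet ι (ℕ →₀ M) Q'' → Q' ⊆ Q'' →
          Q'' = Q' ∨ Q'' = Set.univ)

include hbasis hcomm hact hcompatInv hBass

/-- The packaged structure theorem: for every proper `S`-submodule `𝒩` of `M[x⁻¹]` there
are a maximal `R`-submodule `B` of `M` and an `S`-submodule `core ⊇ 𝒩`, proper, whose
`S`-annihilator is exactly `(ann B)[x]`. -/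
lemma skw_pack (𝒩 : Submodule Sᵐᵒᵖ (ℕ →₀ M))
    (hproper : (𝒩 : Set (ℕ →₀ M)) ≠ Set.univ) :
    ∃ (B : Submodule Rᵐᵒᵖ M) (core : Submodule Sᵐᵒᵖ (ℕ →₀ M)),
      (∃ m, m ∉ B) ∧
      (∀ N' : Submodule Rᵐᵒᵖ M, B ≤ N' → N' ≠ ⊤ → N' = B) ∧
      (∀ m : M, (∀ j : ℕ, Finsupp.single j m ∈ 𝒩) → m ∈ B) ∧
      𝒩 ≤ core ∧ core ≠ ⊤ ∧
      (∀ c : ℕ →₀ R,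
        (c.sum fun k r => ι r * x ^ k) ∈ annIn S (ℕ →₀ M) (core : Set (ℕ →₀ M)) →
          ∀ k, c k ∈ annIn R M (B : Set M)) ∧
      (∀ c : ℕ →₀ R, (∀ k, c k ∈ annIn R M (B : Set M)) →
          (c.sum fun k r => ι r * x ^ k) ∈ annIn S (ℕ →₀ M) (core : Set (ℕ →₀ M))) := by
  classical
  have hsub : IsRSubmoduleSet ι (ℕ →₀ M) (𝒩 : Set (ℕ →₀ M)) :=
    ⟨𝒩.zero_mem, fun f hf g hg => 𝒩.add_mem hf hg, fun f hf => 𝒩.neg_mem hf,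
      fun f hf r => 𝒩.smul_mem _ hf⟩
  obtain ⟨Q', hQ', hNQ, hQprop, hQmax⟩ := hBass (𝒩 : Set (ℕ →₀ M)) hsub hproper
  -- a component with a single outside Q'
  have hAne : ∃ j : ℕ, ∃ m : M, Finsupp.single j m ∉ Q' := by
    obtain ⟨f, hf⟩ := Set.ne_univ_iff_exists_notMem Q' |>.mp hQprop
    by_contra hc
    push_neg at hc
    apply hf
    have : f = ∑ i ∈ f.support, Finsupp.single i (f i) := by
      conv_lhs => rw [← Finsupp.sum_single f]
      rfl
    rw [this]
    exact skw_rsub_sum_mem ι hQ' _ _ fun i _ => hc i (f i)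
  set α := Nat.find hAne with hαdef
  have hα : ∃ m, Finsupp.single α m ∉ Q' := Nat.find_spec hAne
  have hαmin : ∀ j < α, ∀ m : M, Finsupp.single j m ∈ Q' := by
    intro j hj m
    have := Nat.find_min hAne hj
    push_neg at this
    exact this m
  set B : Submodule Rᵐᵒᵖ M := skwBSub σ ι x hact hQ' α with hBdef
  -- the core S-submodule
  have hcore_smul : ∀ (c : ℕ →₀ R) (l : ℕ →₀ M), (∀ k : ℕ, op (x ^ k) • l ∈ Q') →
      ∀ k : ℕ, op (x ^ k) • (op (c.sum fun k' r => ι r * x ^ k') • l) ∈ Q' := by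
    intro c l hl k
    rw [skw_xpow_smul_smul σ ι x hact, Finsupp.sum, skw_op_sum_smul]
    refine skw_rsub_sum_mem ι hQ' _ _ fun k' _ => ?_
    rw [skw_iota_xpow σ ι x hcomm, skw_smul_mul]
    exact hQ'.2.2.2 _ (hl (k' + k)) _
  set core : Submodule Sᵐᵒᵖ (ℕ →₀ M) :=
    { carrier := {l | ∀ k : ℕ, op (x ^ k) • l ∈ Q'}
      zero_mem' := by
        intro k
        rw [smul_zero]
        exact hQ'.1
      add_mem' := by
        intro u v hu hv k
        rw [smul_add]
        exact hQ'.2.1 _ (hu k) _ (hv k)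
      smul_mem' := by
        intro s l hl
        obtain ⟨c, hc⟩ := hbasis.surjective (unop s)
        have hc' : c.sum (fun k r => ι r * x ^ k) = unop s := hc
        have : s • l = op (c.sum fun k r => ι r * x ^ k) • l := by
          rw [hc', op_unop]
        rw [this]
        exact hcore_smul c l hl } with hcoredef
  have hcore_sub : (core : Set (ℕ →₀ M)) ⊆ Q' := by
    intro l hl
    have := hl 0
    rwa [pow_zero, op_one, one_smul] at this
  refine ⟨B, core, hα, ?_, ?_, ?_, ?_, ?_, ?_⟩
  · -- maximality of B
    intro N' hle hne
    by_contra hne'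
    have hlt : B < N' := lt_of_le_of_ne hle (Ne.symm hne')
    obtain ⟨m', hm'N, hm'B⟩ := SetLike.exists_of_lt hlt
    set Q₂ : Set (ℕ →₀ M) :=
      {f | ∃ q ∈ Q', ∃ n : M, n ∈ N' ∧ f = q + Finsupp.single α n} with hQ₂
    have hQ₂sub : IsRSubmoduleSet ι (ℕ →₀ M) Q₂ := by
      refine ⟨⟨0, hQ'.1, 0, N'.zero_mem, by simp⟩, ?_, ?_, ?_⟩
      · rintro f ⟨q, hq, n, hn, rfl⟩ g ⟨p, hp, n', hn', rfl⟩
        exact ⟨q + p, hQ'.2.1 _ hq _ hp, n + n', N'.add_mem hn hn',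
          by rw [Finsupp.single_add]; abel⟩
      · rintro f ⟨q, hq, n, hn, rfl⟩
        exact ⟨-q, hQ'.2.2.1 _ hq, -n, N'.neg_mem hn, by rw [Finsupp.single_neg]; abel⟩
      · rintro f ⟨q, hq, n, hn, rfl⟩ r'
        refine ⟨op (ι r') • q, hQ'.2.2.2 _ hq r', op ((⇑σ.symm)^[α] r') • n,
          N'.smul_mem _ hn, ?_⟩
        rw [smul_add, skw_act_iota σ ι x hact]
    have hQ₂uni : Q₂ = Set.univ := by
      rcases hQmax Q₂ hQ₂sub (fun q hq => ⟨q, hq, 0, N'.zero_mem, by simp⟩) with h | h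
      · exfalso
        apply hm'B
        have : (Finsupp.single α m' : ℕ →₀ M) ∈ Q₂ :=
          ⟨0, hQ'.1, m', hm'N, by rw [zero_add]⟩
        rw [h] at this
        exact this
      · exact h
    apply hne
    rw [Submodule.eq_top_iff']
    intro m
    have : (Finsupp.single α m : ℕ →₀ M) ∈ Q₂ := by rw [hQ₂uni]; trivial
    obtain ⟨q, hq, n, hn, heq⟩ := this
    have hq' : q = Finsupp.single α (m - n) := by
      rw [Finsupp.single_sub]
      rw [heq]
      abel
    have : m - n ∈ B := by
      show Finsupp.single α (m - n) ∈ Q'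
      rw [← hq']
      exact hq
    have : m - n ∈ N' := hle this
    have := N'.add_mem this hn
    rwa [sub_add_cancel] at this
  · -- singles of 𝒩 land in B
    intro m hm
    show Finsupp.single α m ∈ Q'
    exact hNQ (hm α)
  · -- 𝒩 ≤ core
    intro l hl k
    exact hNQ (𝒩.smul_mem _ hl)
  · -- core proper
    obtain ⟨f, hf⟩ := Set.ne_univ_iff_exists_notMem Q' |>.mp hQprop
    intro htop
    exact hf (hcore_sub (htop ▸ Submodule.mem_top : f ∈ core))
  · -- extraction
    intro c hc k
    intro m
    show Finsupp.single α (op (c k) • m) ∈ Q'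
    refine skw_key1 σ ι x hact hcompatInv hQ' hQmax α hα hαmin c ?_ k m
    intro l
    exact hcore_sub (hc l)
  · -- converse
    intro c hc l
    intro k
    exact skw_key2 σ ι x hact hcompatInv hQ' hQmax α hα c (fun k' m => hc k' m) l k

end SkwPack

section SkwNInv

set_option linter.unusedSectionVars false
set_option maxHeartbeats 1000000

variable {R : Type*} [Ring R] (σ : R ≃+* R)
variable {S : Type*} [Ring S] (ι : R →+* S) (x : S)
variable {M : Type*} [AddCommGroup M] [Module Rᵐᵒᵖ M] [Module Sᵐᵒᵖ (ℕ →₀ M)]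
variable (hbasis : Function.Bijective fun c : ℕ →₀ R => c.sum fun k r => ι r * x ^ k)
variable (hact : ∀ (m : M) (i : ℕ) (r : R) (j : ℕ),
      op (ι r * x ^ j) • Finsupp.single i m =
        if j ≤ i then Finsupp.single (i - j) (op ((⇑σ.symm)^[i] r) • m)
        else (0 : ℕ →₀ M))
variable (hcompatInv : ∀ Q : Set (ℕ →₀ M), IsRSubmoduleSet ι (ℕ →₀ M) Q →
      ∀ (f : ℕ →₀ M) (r : R),
        op (ι r) • f ∈ Q ↔ op (ι (σ r)) • f ∈ Q)

lemma skw_single_mem_comp (N : Submodule Rᵐᵒᵖ M) (j : ℕ) (n : M) (hn : n ∈ N) :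
    ∀ j' : ℕ, (Finsupp.single j n : ℕ →₀ M) j' ∈ N := by
  intro j'
  rw [Finsupp.single_apply]
  split_ifs
  · exact hn
  · exact N.zero_mem

include hbasis hact

/-- the inverse polynomial submodule `N[x⁻¹]` as an `S`-submodule. -/
def skwNInv (N : Submodule Rᵐᵒᵖ M) : Submodule Sᵐᵒᵖ (ℕ →₀ M) where
  carrier := {f | ∀ j : ℕ, f j ∈ N}
  zero_mem' := by intro j; simp
  add_mem' := by
    intro u v hu hv j
    rw [Finsupp.add_apply]
    exact N.add_mem (hu j) (hv j)
  smul_mem' := by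
    intro s f hf
    obtain ⟨c, hc⟩ := hbasis.surjective (unop s)
    have hc' : c.sum (fun k r => ι r * x ^ k) = unop s := hc
    have heq : s • f = op (c.sum fun k r => ι r * x ^ k) • f := by rw [hc', op_unop]
    rw [heq]
    show op (c.sum fun k r => ι r * x ^ (id k)) • f ∈ {f : ℕ →₀ M | ∀ j : ℕ, f j ∈ N}
    refine skw_smul_mem σ ι x hact (by intro j; simp) ?_ id c f ?_
    · intro u hu v hv j
      rw [Finsupp.add_apply]
      exact N.add_mem (hu j) (hv j)
    · intro i k hk
      exact skw_single_mem_comp N _ _ (N.smul_mem _ (hf i))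

lemma skw_eval0 (c : ℕ →₀ R) (k : ℕ) (m : M) :
    (op (c.sum fun k' r => ι r * x ^ k') • (Finsupp.single k m : ℕ →₀ M)) 0
      = op ((⇑σ.symm)^[k] (c k)) • m := by
  classical
  have h := skw_smul_single σ ι x hact (fun k => k) c k m
  rw [h, Finsupp.finset_sum_apply]
  by_cases hk : k ∈ c.support
  · rw [Finset.sum_eq_single k]
    · rw [if_pos (le_refl k), Nat.sub_self, Finsupp.single_eq_same]
    · intro b hb hbk
      split_ifs with hble
      · rw [Finsupp.single_apply, if_neg (by omega)]
      · rfl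
    · intro h'
      exact absurd hk h'
  · have hc0 : c k = 0 := Finsupp.notMem_support_iff.mp hk
    rw [hc0, skw_it_zero, op_zero, zero_smul]
    refine Finset.sum_eq_zero fun b hb => ?_
    have hbk : b ≠ k := by rintro rfl; exact hk hb
    split_ifs with hble
    · rw [Finsupp.single_apply, if_neg (by omega)]
    · rfl

include hcompatInv

lemma skw_annIn_NInv (N : Submodule Rᵐᵒᵖ M) :
    annIn S (ℕ →₀ M) ((skwNInv σ ι x hbasis hact N : Submodule Sᵐᵒᵖ (ℕ →₀ M)) : Set (ℕ →₀ M))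
      = polyIn ι x (annIn R M (N : Set M)) := by
  ext s
  constructor
  · intro hs
    obtain ⟨c, hc⟩ := hbasis.surjective s
    have hc' : c.sum (fun k r => ι r * x ^ k) = s := hc
    refine ⟨c, ?_, hc'.symm⟩
    intro k m
    have h1 : op s • (Finsupp.single k m : ℕ →₀ M) ∈ (skwNInv σ ι x hbasis hact N) := hs _
    have h2 := h1 0
    rw [← hc', skw_eval0 σ ι x hbasis hact] at h2
    exact (skw_stab_symm σ ι x hact hcompatInv N m (c k) k).mp h2
  · rintro ⟨c, hcP, rfl⟩
    intro l
    show op (c.sum fun k r => ι r * x ^ (id k)) • l ∈ {f : ℕ →₀ M | ∀ j : ℕ, f j ∈ N}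
    refine skw_smul_mem σ ι x hact (by intro j; simp) ?_ id c l ?_
    · intro u hu v hv j
      rw [Finsupp.add_apply]
      exact N.add_mem (hu j) (hv j)
    · intro i k hk
      refine skw_single_mem_comp N _ _ ?_
      exact (skw_stab_symm σ ι x hact hcompatInv N (l i) (c k) i).mpr (hcP k (l i))

end SkwNInv

theorem attached_primes_inverse_polynomial_skew_eq
    {R : Type*} [Ring R] (σ : R ≃+* R)
    {S : Type*} [Ring S] (ι : R →+* S) (x : S)
    (hbasis : Function.Bijective fun c : ℕ →₀ R => c.sum fun k r => ι r * x ^ k)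
    (hcomm : ∀ r : R, x * ι r = ι (σ r) * x)
    {M : Type*} [AddCommGroup M] [Module Rᵐᵒᵖ M]
    [Module Sᵐᵒᵖ (ℕ →₀ M)]
    (hact : ∀ (m : M) (i : ℕ) (r : R) (j : ℕ),
      op (ι r * x ^ j) • Finsupp.single i m =
        if j ≤ i then Finsupp.single (i - j) (op ((⇑σ.symm)^[i] r) • m)
        else (0 : ℕ →₀ M))
    -- `M[x⁻¹]` is completely `σ`-compatible as a right `R`-module:
    (hcompatInv : ∀ Q : Set (ℕ →₀ M), IsRSubmoduleSet ι (ℕ →₀ M) Q →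
      ∀ (f : ℕ →₀ M) (r : R),
        op (ι r) • f ∈ Q ↔ op (ι (σ r)) • f ∈ Q)
    -- `M[x⁻¹]` is a Bass module as a right `R`-module:
    (hBass : ∀ Q : Set (ℕ →₀ M), IsRSubmoduleSet ι (ℕ →₀ M) Q → Q ≠ Set.univ →
      ∃ Q' : Set (ℕ →₀ M), IsRSubmoduleSet ι (ℕ →₀ M) Q' ∧ Q ⊆ Q' ∧ Q' ≠ Set.univ ∧
        ∀ Q'' : Set (ℕ →₀ M), IsRSubmoduleSet ι (ℕ →₀ M) Q'' → Q' ⊆ Q'' →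
          Q'' = Q' ∨ Q'' = Set.univ) :
    AttSet S (ℕ →₀ M) = {Q : Set S | ∃ P ∈ AttSet R M, Q = polyIn ι x P} := by
  classical
  ext PS
  simp only [Set.mem_setOf_eq, AttSet]
  constructor
  · rintro ⟨hprime, 𝒩, hcop, rfl⟩
    obtain ⟨l₀, hl₀⟩ := hcop.1
    have hproper : (𝒩 : Set (ℕ →₀ M)) ≠ Set.univ := by
      intro h
      exact hl₀ (by rw [← SetLike.mem_coe, h]; trivial)
    obtain ⟨B, core, hBne, hBmax, hsing, hNc, hcne, hkey1, hkey2⟩ :=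
      skw_pack σ ι x hbasis hcomm hact hcompatInv hBass 𝒩 hproper
    have hann : annIn S (ℕ →₀ M) (𝒩 : Set (ℕ →₀ M))
        = annIn S (ℕ →₀ M) (core : Set (ℕ →₀ M)) := hcop.2 core hNc hcne
    have hBcop : CoprimeQuot R M B :=
      ⟨hBne, fun N' hle hne => by rw [hBmax N' hle hne]⟩
    refine ⟨annIn R M (B : Set M), ⟨coprime_ann_prime B hBcop, B, hBcop, rfl⟩, ?_⟩
    ext s
    constructor
    · intro hs
      obtain ⟨c, hc⟩ := hbasis.surjective s
      have hc' : c.sum (fun k r => ι r * x ^ k) = s := hc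
      refine ⟨c, ?_, hc'.symm⟩
      intro k
      have hs' : s ∈ annIn S (ℕ →₀ M) (core : Set (ℕ →₀ M)) := by rw [← hann]; exact hs
      rw [← hc'] at hs'
      exact hkey1 c hs' k
    · rintro ⟨c, hcP, rfl⟩
      rw [hann]
      exact hkey2 c hcP
  · rintro ⟨P, ⟨hPprime, N, hcopN, hPeq⟩, rfl⟩
    have hkey3 : annIn S (ℕ →₀ M)
        ((skwNInv σ ι x hbasis hact N : Submodule Sᵐᵒᵖ (ℕ →₀ M)) : Set (ℕ →₀ M))
        = polyIn ι x P := by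
      rw [hPeq]
      exact skw_annIn_NInv σ ι x hbasis hact hcompatInv N
    obtain ⟨m₀, hm₀⟩ := hcopN.1
    have hcoNInv : CoprimeQuot S (ℕ →₀ M) (skwNInv σ ι x hbasis hact N) := by
      constructor
      · refine ⟨Finsupp.single 0 m₀, fun h => hm₀ ?_⟩
        have := h 0
        rwa [Finsupp.single_eq_same] at this
      · intro 𝒩' hle hne
        apply Set.Subset.antisymm
        · intro s hs l
          exact hle (hs l)
        · intro s hs
          have hproper' : (𝒩' : Set (ℕ →₀ M)) ≠ Set.univ := by
            intro h
            apply hne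
            rw [Submodule.eq_top_iff']
            intro f
            rw [← SetLike.mem_coe, h]
            trivial
          obtain ⟨B, core, hBne, hBmax, hsing, hNc, hcne, hkey1, hkey2⟩ :=
            skw_pack σ ι x hbasis hcomm hact hcompatInv hBass 𝒩' hproper'
          have hNB : N ≤ B := by
            intro n hn
            exact hsing n fun j => hle (skw_single_mem_comp N j n hn)
          have hBneT : B ≠ ⊤ := by
            intro h
            obtain ⟨m, hm⟩ := hBne
            exact hm (h ▸ Submodule.mem_top)
          have hPB : P = annIn R M (B : Set M) := hPeq.trans (hcopN.2 B hNB hBneT)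
          obtain ⟨c, hc⟩ := hbasis.surjective s
          have hc' : c.sum (fun k r => ι r * x ^ k) = s := hc
          have hsc : c.sum (fun k r => ι r * x ^ k)
              ∈ annIn S (ℕ →₀ M) (core : Set (ℕ →₀ M)) := by
            intro l
            rw [hc']
            exact hNc (hs l)
          have hck := hkey1 c hsc
          rw [hkey3]
          refine ⟨c, ?_, hc'.symm⟩
          intro k
          rw [hPB]
          exact hck k
    refine ⟨?_, skwNInv σ ι x hbasis hact N, hcoNInv, hkey3.symm⟩
    rw [← hkey3]
    exact coprime_ann_prime _ hcoNInv
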